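/- Let Σ be a finite set with at least two elements and let x ∈ Σ^G be non-periodic, i.e. g·x = x implies g = 1_G. Then x is a Toeplitz array if and only if x is a regularly recurrent point of the full shift (Σ^G, G), i.e. for every open set U ⊆ Σ^G containing x there exists a finite-index subgroup Γ ≤ G such that γ·x ∈ U for all γ ∈ Γ. -/
import Mathlib


open Topology Set

/-- The shift action of `G` on `A^G`: `(g · x)(h) = x(h·g)`. -/
def shift {G A : Type*} [Mul G] (g : G) (x : G → A) : G → A := fun h => x (h * g)

/-- For a finite alphabet `S` with at least two elements and a
non-periodic `x ∈ S^G`, `x` is a Toeplitz array if and only if `x` is a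
regularly recurrent point of the full shift `(S^G, G)`. -/
theorem statement15
    {G : Type*} [Group G] [Countable G]
    {S : Type*} [Fintype S] [TopologicalSpace S] [DiscreteTopology S]
    (hcard : 2 ≤ Fintype.card S)
    (x : G → S)
    (h_nonperiodic : ∀ g : G, shift g x = x → g = 1) :
    (∀ g : G, ∃ Γ : Subgroup G, Γ.FiniteIndex ∧ ∀ γ ∈ Γ, x (g * γ) = x g) ↔
    (∀ U : Set (G → S), IsOpen U → x ∈ U →
      ∃ Γ : Subgroup G, Γ.FiniteIndex ∧ ∀ γ ∈ Γ, shift γ x ∈ U) := by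
  constructor
  · intro htop U hU hxU
    choose Γ hΓfi hΓ using htop
    obtain ⟨I, u, hu, hsub⟩ := isOpen_pi_iff.mp hU x hxU
    refine ⟨⨅ g ∈ I, Γ g, Subgroup.finiteIndex_iInf' Γ (fun g _ => hΓfi g), ?_⟩
    intro γ hγ
    apply hsub
    intro g hgI
    have hγg : γ ∈ Γ g := by
      have := hγ
      simp only [Subgroup.mem_iInf] at this
      exact this g hgI
    have : x (g * γ) = x g := hΓ g γ hγg
    simpa [shift, this] using (hu g hgI).2
  · intro hrec g
    obtain ⟨Γ, hfi, hΓ⟩ := hrec ((fun y : G → S => y g) ⁻¹' {x g})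
      ((isOpen_discrete {x g}).preimage (continuous_apply g)) rfl
    exact ⟨Γ, hfi, fun γ hγ => hΓ γ hγ⟩
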